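/- Fix n ∈ ℕ, ε > 0 and K ≥ 2^n·ε, and let (P, v) be the packing game of the instability construction with weights w. Then the allocation y : P → ℝ defined by y(r) = 1 and y(p_i^{(l)}) = y(q_i^{(l)}) = l·K for all l ∈ {1,…,n+2}, i ∈ {1,…,4}, lies in the core of (P, v): y(P) = v(P) and y(S) ≥ v(S) for all S ⊆ P. -/
import Mathlib


/-- The players of the instability construction: a root `r`, and players `p i (l)`,
`q i (l)` for levels `l ∈ {1, …, n+2}` (encoded by `Fin (n+2)`, level `= l.1 + 1`) and
`i ∈ {1, …, 4}`. -/
inductive Player (n : ℕ) : Type where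
  | r : Player n
  | p : Fin (n + 2) → Fin 4 → Player n
  | q : Fin (n + 2) → Fin 4 → Player n
  deriving DecidableEq, Fintype

/-- Index set for the family `𝒮` of the instability construction. -/
inductive Idx (n : ℕ) : Type where
  | root : Idx n
  | rootP : Fin 4 → Idx n
  | pair : Fin (n + 2) → Fin 4 → Idx n
  | quad : Fin (n + 1) → Fin 4 → Idx n
  deriving DecidableEq, Fintype

/-- The coalitions of the family `𝒮`: `{r}`; `{r, p_i^{(1)}}`; `{p_i^{(l)}, q_i^{(l)}}`;
and `{q_1^{(l)}, q_2^{(l)}, q_3^{(l)}, q_4^{(l)}, p_i^{(l+1)}}`. -/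
def coal {n : ℕ} : Idx n → Finset (Player n)
  | .root => {Player.r}
  | .rootP i => {Player.r, Player.p 0 i}
  | .pair l i => {Player.p l i, Player.q l i}
  | .quad l i => {Player.q l.castSucc 0, Player.q l.castSucc 1, Player.q l.castSucc 2,
      Player.q l.castSucc 3, Player.p l.succ i}

/-- The weights of the family `𝒮`: `rootW` on `{r}` (which is `1` for `w` and `1 − ε` for
`w̃`); `1` on `{r, p_i^{(1)}}`; `2·l·K` on `{p_i^{(l)}, q_i^{(l)}}`; and `4·l·K` on
`{q_1^{(l)}, …, q_4^{(l)}, p_i^{(l+1)}}`. -/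
noncomputable def wt {n : ℕ} (K rootW : ℝ) : Idx n → ℝ
  | .root => rootW
  | .rootP _ => 1
  | .pair l _ => 2 * ((l.1 : ℝ) + 1) * K
  | .quad l _ => 4 * ((l.1 : ℝ) + 1) * K

/-- The packing game of the instability construction: `packV n K rootW S` is the maximum
total weight of a packing of pairwise disjoint members of `𝒮` inside `S` (the empty
packing is allowed). -/
noncomputable def packV (n : ℕ) (K rootW : ℝ) (S : Finset (Player n)) : ℝ :=
  ((Finset.univ : Finset (Idx n)).powerset.filter (fun F =>
      (∀ j ∈ F, coal j ⊆ S) ∧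
      ∀ j ∈ F, ∀ j' ∈ F, j ≠ j' → Disjoint (coal j) (coal j'))).sup'
    ⟨∅, by simp⟩ (fun F => ∑ j ∈ F, wt K rootW j)

/-- The allocation `y` with `y(r) = 1` and
`y(p_i^{(l)}) = y(q_i^{(l)}) = l·K` lies in the core of the packing game `(P, v)` of the
instability construction (with `ε > 0` and `K ≥ 2^n·ε`). -/
theorem stmt13 (n : ℕ) (ε K : ℝ) (hε : 0 < ε) (hK : 2 ^ n * ε ≤ K)
    (y : Player n → ℝ)
    (hyr : y Player.r = 1)
    (hyp : ∀ (l : Fin (n + 2)) (i : Fin 4), y (Player.p l i) = ((l.1 : ℝ) + 1) * K)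
    (hyq : ∀ (l : Fin (n + 2)) (i : Fin 4), y (Player.q l i) = ((l.1 : ℝ) + 1) * K) :
    (∑ p, y p) = packV n K 1 Finset.univ ∧
    ∀ S : Finset (Player n), packV n K 1 S ≤ ∑ p ∈ S, y p := by
  have hK0 : 0 < K := lt_of_lt_of_le (by positivity) hK
  have hy0 : ∀ p, 0 ≤ y p := by
    intro p
    cases p with
    | r => rw [hyr]; norm_num
    | p l i => rw [hyp]; positivity
    | q l i => rw [hyq]; positivity
  have hwt : ∀ j : Idx n, wt K 1 j ≤ ∑ p ∈ coal j, y p := by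
    intro j
    cases j with
    | root => simp [coal, wt, hyr]
    | rootP i =>
      have hne : (Player.r : Player n) ≠ Player.p 0 i := by simp
      rw [show (coal (.rootP i) : Finset (Player n)) = {Player.r, Player.p 0 i} from rfl,
        Finset.sum_pair hne, hyr, hyp]
      simp only [wt]
      nlinarith
    | pair l i =>
      have hne : (Player.p l i : Player n) ≠ Player.q l i := by simp
      rw [show (coal (.pair l i) : Finset (Player n)) = {Player.p l i, Player.q l i} from rfl,
        Finset.sum_pair hne, hyp, hyq]
      simp only [wt]
      nlinarith
    | quad l i =>
      have h01 : (Player.q l.castSucc 0 : Player n) ∉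
          ({Player.q l.castSucc 1, Player.q l.castSucc 2, Player.q l.castSucc 3,
            Player.p l.succ i} : Finset (Player n)) := by simp
      have h12 : (Player.q l.castSucc 1 : Player n) ∉
          ({Player.q l.castSucc 2, Player.q l.castSucc 3,
            Player.p l.succ i} : Finset (Player n)) := by simp
      have h23 : (Player.q l.castSucc 2 : Player n) ∉
          ({Player.q l.castSucc 3, Player.p l.succ i} : Finset (Player n)) := by simp
      have h34 : (Player.q l.castSucc 3 : Player n) ≠ Player.p l.succ i := by simp
      rw [show (coal (.quad l i) : Finset (Player n)) =
        insert (Player.q l.castSucc 0) (insert (Player.q l.castSucc 1)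
          (insert (Player.q l.castSucc 2)
            ({Player.q l.castSucc 3, Player.p l.succ i} : Finset (Player n)))) from rfl,
        Finset.sum_insert h01, Finset.sum_insert h12, Finset.sum_insert h23,
        Finset.sum_pair h34, hyp, hyq, hyq, hyq, hyq]
      simp only [wt, Fin.coe_castSucc, Fin.val_succ]
      push_cast
      nlinarith
  -- general upper bound
  have hub : ∀ S : Finset (Player n), packV n K 1 S ≤ ∑ p ∈ S, y p := by
    intro S
    apply Finset.sup'_le
    intro F hF
    simp only [Finset.mem_filter, Finset.mem_powerset] at hF
    obtain ⟨-, hsub, hdisj⟩ := hF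
    have hpd : (↑F : Set (Idx n)).PairwiseDisjoint coal := by
      intro a ha b hb hab
      exact hdisj a ha b hb hab
    calc ∑ j ∈ F, wt K 1 j ≤ ∑ j ∈ F, ∑ p ∈ coal j, y p :=
          Finset.sum_le_sum fun j _ => hwt j
      _ = ∑ p ∈ F.biUnion coal, y p := (Finset.sum_biUnion hpd).symm
      _ ≤ ∑ p ∈ S, y p := by
          apply Finset.sum_le_sum_of_subset_of_nonneg
          · intro x hx
            rw [Finset.mem_biUnion] at hx
            obtain ⟨j, hj, hxj⟩ := hx
            exact hsub j hj hxj
          · intro x _ _; exact hy0 x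
  refine ⟨?_, hub⟩
  -- the optimal packing
  set F₀ : Finset (Idx n) := insert Idx.root
    ((Finset.univ : Finset (Fin (n + 2) × Fin 4)).image fun li => Idx.pair li.1 li.2) with hF₀
  have hmem : ∀ j ∈ F₀, j = Idx.root ∨ ∃ l i, j = Idx.pair l i := by
    intro j hj
    rw [hF₀, Finset.mem_insert] at hj
    rcases hj with rfl | hj
    · exact Or.inl rfl
    · rw [Finset.mem_image] at hj
      obtain ⟨⟨l, i⟩, -, rfl⟩ := hj
      exact Or.inr ⟨l, i, rfl⟩
  have hpairmem : ∀ (l : Fin (n + 2)) (i : Fin 4), Idx.pair l i ∈ F₀ := by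
    intro l i
    rw [hF₀, Finset.mem_insert]
    exact Or.inr (Finset.mem_image.2 ⟨(l, i), Finset.mem_univ _, rfl⟩)
  have hdisjF : ∀ j ∈ F₀, ∀ j' ∈ F₀, j ≠ j' → Disjoint (coal j) (coal j') := by
    intro j hj j' hj' hne
    rcases hmem j hj with rfl | ⟨l, i, rfl⟩ <;>
      rcases hmem j' hj' with rfl | ⟨l', i', rfl⟩
    · exact absurd rfl hne
    · simp [coal, Finset.disjoint_left]
    · simp [coal, Finset.disjoint_left]
    · simp only [ne_eq, Idx.pair.injEq, not_and] at hne
      simp only [coal, Finset.disjoint_left, Finset.mem_insert, Finset.mem_singleton]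
      rintro a (rfl | rfl) h
      · rcases h with h | h
        · rw [Player.p.injEq] at h
          exact hne h.1 h.2
        · exact absurd h (by simp)
      · rcases h with h | h
        · exact absurd h (by simp)
        · rw [Player.q.injEq] at h
          exact hne h.1 h.2
  have hF₀mem : F₀ ∈ (Finset.univ : Finset (Idx n)).powerset.filter (fun F =>
      (∀ j ∈ F, coal j ⊆ (Finset.univ : Finset (Player n))) ∧
      ∀ j ∈ F, ∀ j' ∈ F, j ≠ j' → Disjoint (coal j) (coal j')) := by
    rw [Finset.mem_filter, Finset.mem_powerset]
    exact ⟨Finset.subset_univ _, fun j _ => Finset.subset_univ _, hdisjF⟩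
  have hcover : F₀.biUnion coal = (Finset.univ : Finset (Player n)) := by
    apply Finset.eq_univ_of_forall
    intro x
    rw [Finset.mem_biUnion]
    cases x with
    | r => exact ⟨Idx.root, by rw [hF₀]; exact Finset.mem_insert_self _ _, by simp [coal]⟩
    | p l i => exact ⟨Idx.pair l i, hpairmem l i, by simp [coal]⟩
    | q l i => exact ⟨Idx.pair l i, hpairmem l i, by simp [coal]⟩
  have hwt_eq : ∀ j ∈ F₀, ∑ p ∈ coal j, y p = wt K 1 j := by
    intro j hj
    rcases hmem j hj with rfl | ⟨l, i, rfl⟩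
    · simp [coal, wt, hyr]
    · have hne : (Player.p l i : Player n) ≠ Player.q l i := by simp
      rw [show (coal (.pair l i) : Finset (Player n)) = {Player.p l i, Player.q l i} from rfl,
        Finset.sum_pair hne, hyp, hyq]
      simp only [wt]
      ring
  have hpd : (↑F₀ : Set (Idx n)).PairwiseDisjoint coal := by
    intro a ha b hb hab
    exact hdisjF a ha b hb hab
  have hsum : (∑ p, y p) = ∑ j ∈ F₀, wt K 1 j := by
    rw [← hcover, Finset.sum_biUnion hpd]
    exact Finset.sum_congr rfl hwt_eq
  have hle : (∑ p, y p) ≤ packV n K 1 Finset.univ := by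
    rw [hsum, packV]
    exact Finset.le_sup' (fun F => ∑ j ∈ F, wt K 1 j) hF₀mem
  exact le_antisymm hle (hub Finset.univ)
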